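/- If (x*,λ*,μ*) is a KKT point of the nonlinear semidefinite programming problem (P), then 𝓛(x*,λ*,μ*,c) = f(x*) for every c > 0. -/

import Mathlib

open Filter Topology Set Bornology Matrix

attribute [local instance] Matrix.frobeniusNormedAddCommGroup Matrix.frobeniusNormedSpace

noncomputable section

variable {d l s : ℕ}

/-- A square real matrix is negative semidefinite iff its negation is positive semidefinite. -/
def Matrix.NegSemidef (A : Matrix (Fin l) (Fin l) ℝ) : Prop := (-A).PosSemidef

/-- The metric projection (in the Frobenius norm) of a symmetric matrix onto the closed convex
cone of positive semidefinite matrices. -/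
def psdProj (A : Matrix (Fin l) (Fin l) ℝ) : Matrix (Fin l) (Fin l) ℝ :=
  Classical.epsilon fun B : Matrix (Fin l) (Fin l) ℝ => B.PosSemidef ∧
    ∀ C : Matrix (Fin l) (Fin l) ℝ, C.PosSemidef →
      ((A - B) * (A - B)ᵀ).trace ≤ ((A - C) * (A - C)ᵀ).trace

/-- The standard Lagrangian of the nonlinear semidefinite programming problem. -/
def sdpLagrangian (f : EuclideanSpace ℝ (Fin d) → ℝ)
    (G : EuclideanSpace ℝ (Fin d) → Matrix (Fin l) (Fin l) ℝ)
    (h : EuclideanSpace ℝ (Fin d) → EuclideanSpace ℝ (Fin s))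
    (x : EuclideanSpace ℝ (Fin d)) (lam : Matrix (Fin l) (Fin l) ℝ)
    (mu : EuclideanSpace ℝ (Fin s)) : ℝ :=
  f x + (lam * G x).trace + inner ℝ mu (h x)

/-- The function `η (x, λ, μ) = ‖∇ₓ L (x, λ, μ)‖² + tr (λ² G(x)²)`. -/
def sdpEta (f : EuclideanSpace ℝ (Fin d) → ℝ)
    (G : EuclideanSpace ℝ (Fin d) → Matrix (Fin l) (Fin l) ℝ)
    (h : EuclideanSpace ℝ (Fin d) → EuclideanSpace ℝ (Fin s))
    (x : EuclideanSpace ℝ (Fin d)) (lam : Matrix (Fin l) (Fin l) ℝ)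
    (mu : EuclideanSpace ℝ (Fin s)) : ℝ :=
  ‖gradient (fun y => sdpLagrangian f G h y lam mu) x‖ ^ 2 + (lam ^ 2 * (G x) ^ 2).trace

variable (f : EuclideanSpace ℝ (Fin d) → ℝ)
    (G : EuclideanSpace ℝ (Fin d) → Matrix (Fin l) (Fin l) ℝ)
    (h : EuclideanSpace ℝ (Fin d) → EuclideanSpace ℝ (Fin s)) (α κ : ℝ)

/-- `a (x) = α − tr([G(x)]₊²)^κ`. -/
def sdpA (x : EuclideanSpace ℝ (Fin d)) : ℝ := α - ((psdProj (G x) ^ 2).trace) ^ κ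

/-- `b (x) = α − ‖h(x)‖²`. -/
def sdpB (x : EuclideanSpace ℝ (Fin d)) : ℝ := α - ‖h x‖ ^ 2

/-- `p (x, λ) = a(x) / (1 + tr(λ²))`. -/
def sdpP (x : EuclideanSpace ℝ (Fin d)) (lam : Matrix (Fin l) (Fin l) ℝ) : ℝ :=
  sdpA G α κ x / (1 + (lam ^ 2).trace)

/-- `q (x, μ) = b(x) / (1 + ‖μ‖²)`. -/
def sdpQ (x : EuclideanSpace ℝ (Fin d)) (mu : EuclideanSpace ℝ (Fin s)) : ℝ :=
  sdpB h α x / (1 + ‖mu‖ ^ 2)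

open Classical in
/-- The continuously differentiable augmented Lagrangian `𝓛 (x, λ, μ, c)` for the nonlinear
semidefinite programming problem. -/
def sdpAugLagrangian (x : EuclideanSpace ℝ (Fin d)) (lam : Matrix (Fin l) (Fin l) ℝ)
    (mu : EuclideanSpace ℝ (Fin s)) (c : ℝ) : EReal :=
  if 0 < sdpA G α κ x ∧ 0 < sdpB h α x then
    ((f x
      + (1 / (2 * c * sdpP G α κ x lam)) *
        ((psdProj (c • G x + sdpP G α κ x lam • lam) ^ 2).trace
          - (sdpP G α κ x lam) ^ 2 * (lam ^ 2).trace)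
      + inner ℝ mu (h x) + (c / (2 * sdpQ h α x mu)) * ‖h x‖ ^ 2
      + sdpEta f G h x lam mu : ℝ) : EReal)
  else ⊤

/-- The feasible set of the nonlinear semidefinite programming problem. -/
def sdpFeasible : Set (EuclideanSpace ℝ (Fin d)) := {x | (G x).NegSemidef ∧ h x = 0}

/-- The set of globally optimal solutions of the nonlinear semidefinite programming problem. -/
def sdpOptimal : Set (EuclideanSpace ℝ (Fin d)) :=
  {x ∈ sdpFeasible G h | ∀ y ∈ sdpFeasible G h, f x ≤ f y}

/-- `(x, λ, μ)` is a global minimizer of `𝓛 (·, ·, ·, c)` over `ℝ^d × 𝕊^l × ℝ^s`. -/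
def sdpGlobMin (c : ℝ) (x : EuclideanSpace ℝ (Fin d)) (lam : Matrix (Fin l) (Fin l) ℝ)
    (mu : EuclideanSpace ℝ (Fin s)) : Prop :=
  lam.IsSymm ∧ ∀ x' lam' mu', (lam' : Matrix (Fin l) (Fin l) ℝ).IsSymm →
    sdpAugLagrangian f G h α κ x lam mu c ≤ sdpAugLagrangian f G h α κ x' lam' mu' c

/-- The augmented Lagrangian `𝓛` is globally extendedly exact (with respect to `η`). -/
def sdpGloballyExtendedlyExact : Prop :=
  ∃ c₀ > (0 : ℝ), ∀ c ≥ c₀,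
    (∀ x lam mu, sdpGlobMin f G h α κ c x lam mu →
      sdpEta f G h x lam mu = 0 ∧ x ∈ sdpOptimal f G h) ∧
    (∀ x ∈ sdpOptimal f G h, ∀ (lam : Matrix (Fin l) (Fin l) ℝ) mu, lam.IsSymm →
      sdpEta f G h x lam mu = 0 → sdpGlobMin f G h α κ c x lam mu)

/-- The augmented Lagrangian `𝓛` is locally extendedly exact at `xs`. -/
def sdpLocallyExtendedlyExactAt (xs : EuclideanSpace ℝ (Fin d)) : Prop :=
  ∀ (lam : Matrix (Fin l) (Fin l) ℝ) mu, lam.IsSymm → sdpEta f G h xs lam mu = 0 →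
    ∃ c₀ > (0 : ℝ), ∃ U ∈ 𝓝 ((xs, lam, mu) :
        EuclideanSpace ℝ (Fin d) × Matrix (Fin l) (Fin l) ℝ × EuclideanSpace ℝ (Fin s)),
      ∀ x lam' mu', (x, lam', mu') ∈ U → (lam' : Matrix (Fin l) (Fin l) ℝ).IsSymm →
        ∀ c ≥ c₀, sdpAugLagrangian f G h α κ xs lam mu c ≤ sdpAugLagrangian f G h α κ x lam' mu' c

/-- The augmented Lagrangian `𝓛` is non-degenerate. -/
def sdpNonDegenerate : Prop :=
  ∃ c₀ > (0 : ℝ), ∃ R > (0 : ℝ), ∀ c ≥ c₀, ∃ x lam mu,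
    sdpGlobMin f G h α κ c x lam mu ∧ ‖x‖ + ‖lam‖ + ‖mu‖ ≤ R

/-- `(x, λ, μ)` is a KKT point of the nonlinear semidefinite programming problem. -/
def sdpKKT (x : EuclideanSpace ℝ (Fin d)) (lam : Matrix (Fin l) (Fin l) ℝ)
    (mu : EuclideanSpace ℝ (Fin s)) : Prop :=
  lam.IsSymm ∧ (G x).NegSemidef ∧ h x = 0 ∧ lam.PosSemidef ∧ (lam * G x).trace = 0 ∧
    gradient (fun y => sdpLagrangian f G h y lam mu) x = 0

/-- A feasible point `x` is nondegenerate: for some basis `e₁, …, e_{l-r}` of the null space of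
`G(x)` (where `r = rank G(x)`), the vectors `vᵢⱼ = (eᵢᵀ (∂G/∂x₁)(x) eⱼ, …, eᵢᵀ (∂G/∂x_d)(x) eⱼ)`,
`1 ≤ i ≤ j ≤ l - r`, together with the gradients `∇hₖ(x)`, `k = 1, …, s`, are linearly
independent. -/
def sdpNondegeneratePoint (x : EuclideanSpace ℝ (Fin d)) : Prop :=
  ∃ e : Module.Basis (Fin (l - (G x).rank)) ℝ (LinearMap.ker (Matrix.mulVecLin (G x))),
    LinearIndependent ℝ
      (fun idx : {pr : Fin (l - (G x).rank) × Fin (l - (G x).rank) // pr.1 ≤ pr.2} ⊕ Fin s =>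
        Sum.elim
          (fun pr : {pr : Fin (l - (G x).rank) × Fin (l - (G x).rank) // pr.1 ≤ pr.2} =>
            fun k : Fin d =>
              (e pr.1.1 : Fin l → ℝ) ⬝ᵥ
                (fderiv ℝ G x (EuclideanSpace.single k 1)) *ᵥ (e pr.1.2 : Fin l → ℝ))
          (fun j : Fin s => fun k : Fin d =>
            fderiv ℝ (fun y => h y j) x (EuclideanSpace.single k 1))
          idx)



section helpers
open scoped MatrixOrder
variable {n : ℕ}

lemma trace_mul_transpose_self_eq_sum (M : Matrix (Fin n) (Fin n) ℝ) :
    (M * Mᵀ).trace = ∑ i, ∑ j, (M i j) ^ 2 := by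
  simp [Matrix.trace, Matrix.mul_apply, Matrix.diag, sq]

lemma trace_mul_transpose_self_nonneg (M : Matrix (Fin n) (Fin n) ℝ) :
    0 ≤ (M * Mᵀ).trace := by
  rw [trace_mul_transpose_self_eq_sum]; positivity

lemma eq_zero_of_trace_mul_transpose_self (M : Matrix (Fin n) (Fin n) ℝ)
    (h : (M * Mᵀ).trace ≤ 0) : M = 0 := by
  rw [trace_mul_transpose_self_eq_sum] at h
  have h0 : ∑ i, ∑ j, (M i j) ^ 2 = 0 := le_antisymm h (by positivity)
  ext i j
  have hi := (Finset.sum_eq_zero_iff_of_nonneg (fun i _ => by positivity)).mp h0 i (Finset.mem_univ i)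
  have hj := (Finset.sum_eq_zero_iff_of_nonneg (fun j _ => by positivity)).mp hi j (Finset.mem_univ j)
  simpa using pow_eq_zero_iff (n := 2) (by norm_num) |>.mp hj

lemma psd_transpose_eq {M : Matrix (Fin n) (Fin n) ℝ} (hM : M.PosSemidef) :
    Mᵀ = M := by
  rw [← Matrix.conjTranspose_eq_transpose_of_trivial]; exact hM.1

lemma trace_psd_mul_key {C N : Matrix (Fin n) (Fin n) ℝ} (hC : C.PosSemidef)
    (hN : N.PosSemidef) :
    (C * N).trace = ((CFC.sqrt C * CFC.sqrt N) * (CFC.sqrt C * CFC.sqrt N)ᵀ).trace := by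
  have hc : (CFC.sqrt C)ᵀ = CFC.sqrt C := psd_transpose_eq (CFC.sqrt_nonneg C).posSemidef
  have hn : (CFC.sqrt N)ᵀ = CFC.sqrt N := psd_transpose_eq (CFC.sqrt_nonneg N).posSemidef
  conv_lhs => rw [← CFC.sqrt_mul_sqrt_self C hC.nonneg, ← CFC.sqrt_mul_sqrt_self N hN.nonneg]
  rw [Matrix.transpose_mul, hc, hn]
  rw [show CFC.sqrt C * CFC.sqrt C * (CFC.sqrt N * CFC.sqrt N) = CFC.sqrt C * (CFC.sqrt C * CFC.sqrt N * CFC.sqrt N) by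
    simp only [Matrix.mul_assoc]]
  rw [Matrix.trace_mul_comm]
  simp only [Matrix.mul_assoc]

lemma trace_psd_mul_nonneg {C N : Matrix (Fin n) (Fin n) ℝ} (hC : C.PosSemidef)
    (hN : N.PosSemidef) : 0 ≤ (C * N).trace := by
  rw [trace_psd_mul_key hC hN]; exact trace_mul_transpose_self_nonneg _

lemma psd_mul_eq_zero_of_trace {C N : Matrix (Fin n) (Fin n) ℝ} (hC : C.PosSemidef)
    (hN : N.PosSemidef) (h : (C * N).trace = 0) : C * N = 0 := by
  have hz := eq_zero_of_trace_mul_transpose_self (CFC.sqrt C * CFC.sqrt N)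
    (by rw [← trace_psd_mul_key hC hN, h])
  calc C * N = CFC.sqrt C * (CFC.sqrt C * CFC.sqrt N * CFC.sqrt N) := by
        conv_lhs => rw [← CFC.sqrt_mul_sqrt_self C hC.nonneg, ← CFC.sqrt_mul_sqrt_self N hN.nonneg]
        simp only [Matrix.mul_assoc]
    _ = 0 := by rw [hz, Matrix.zero_mul, Matrix.mul_zero]

lemma posSemidef_smul_real {M : Matrix (Fin n) (Fin n) ℝ} (hM : M.PosSemidef) {c : ℝ}
    (hc : 0 ≤ c) : (c • M).PosSemidef := by
  exact hM.smul hc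

lemma tsq_sub_expand (X Y : Matrix (Fin n) (Fin n) ℝ) :
    ((X - Y) * (X - Y)ᵀ).trace
      = (X * Xᵀ).trace - 2 * (X * Yᵀ).trace + (Y * Yᵀ).trace := by
  have hxy : (Y * Xᵀ).trace = (X * Yᵀ).trace := by
    rw [← Matrix.trace_transpose (Y * Xᵀ), Matrix.transpose_mul, Matrix.transpose_transpose]
  simp only [Matrix.transpose_sub, Matrix.sub_mul, Matrix.mul_sub, Matrix.trace_sub, hxy]
  ring

end helpers

lemma psdProj_eq {A P N : Matrix (Fin l) (Fin l) ℝ} (hP : P.PosSemidef) (hN : N.PosSemidef)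
    (hA : A = P - N) (hPN : P * N = 0) : psdProj A = P := by
  have hNt : Nᵀ = N := psd_transpose_eq hN
  have key : ∀ C : Matrix (Fin l) (Fin l) ℝ,
      ((A - C) * (A - C)ᵀ).trace
        = ((P - C) * (P - C)ᵀ).trace + 2 * (C * N).trace + (N * N).trace := by
    intro C
    have h1 : A - C = (P - C) - N := by rw [hA]; abel
    have h2 : ((P - C) * N).trace = - (C * N).trace := by
      rw [Matrix.sub_mul, Matrix.trace_sub, hPN, Matrix.trace_zero]; ring
    rw [h1, tsq_sub_expand, hNt, h2]
    ring
  have hex : ∃ B : Matrix (Fin l) (Fin l) ℝ, B.PosSemidef ∧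
      ∀ C : Matrix (Fin l) (Fin l) ℝ, C.PosSemidef →
        ((A - B) * (A - B)ᵀ).trace ≤ ((A - C) * (A - C)ᵀ).trace := by
    refine ⟨P, hP, fun C hC => ?_⟩
    rw [key P, key C]
    have h3 := trace_psd_mul_nonneg hC hN
    have h4 := trace_mul_transpose_self_nonneg (P - C)
    have h5 : (P * N).trace = 0 := by rw [hPN, Matrix.trace_zero]
    simp only [sub_self, Matrix.zero_mul, Matrix.trace_zero, h5]
    linarith
  have hB := Classical.epsilon_spec hex
  set B := psdProj A with hBdef
  have hle : ((A - B) * (A - B)ᵀ).trace ≤ ((A - P) * (A - P)ᵀ).trace := hB.2 P hP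
  rw [key B, key P] at hle
  have h3 : 0 ≤ (B * N).trace := trace_psd_mul_nonneg hB.1 hN
  have h4 := trace_mul_transpose_self_nonneg (P - B)
  have h5 : (P * N).trace = 0 := by rw [hPN, Matrix.trace_zero]
  simp only [sub_self, Matrix.zero_mul, Matrix.trace_zero, h5] at hle
  have h6 : P - B = 0 := eq_zero_of_trace_mul_transpose_self _ (by linarith)
  exact (sub_eq_zero.mp h6).symm

/-- If `(x*, λ*, μ*)` is a KKT point of the nonlinear semidefinite programming problem, then
`𝓛 (x*, λ*, μ*, c) = f (x*)` for every `c > 0`. -/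
theorem sdp_augLagrangian_eq_at_KKT_points
    (hf : ContDiff ℝ 1 f) (hG : ContDiff ℝ 1 G) (hh : ContDiff ℝ 1 h)
    (hGsymm : ∀ x, (G x).IsSymm)
    (hα : 0 < α) (hκ : 1 ≤ κ)
    (x : EuclideanSpace ℝ (Fin d)) (lam : Matrix (Fin l) (Fin l) ℝ)
    (mu : EuclideanSpace ℝ (Fin s))
    (hKKT : sdpKKT f G h x lam mu) :
    ∀ c > (0 : ℝ), sdpAugLagrangian f G h α κ x lam mu c = ((f x : ℝ) : EReal) := by
  obtain ⟨hlsymm, hGneg, hhx, hlpsd, htr, hgrad⟩ := hKKT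
  intro c hc
  have hnegG : (-(G x)).PosSemidef := hGneg
  have hlamG : lam * G x = 0 := by
    have h0 : (lam * (-(G x))).trace = 0 := by
      rw [Matrix.mul_neg, Matrix.trace_neg, htr, neg_zero]
    have hz := psd_mul_eq_zero_of_trace hlpsd hnegG h0
    rw [Matrix.mul_neg, neg_eq_zero] at hz
    exact hz
  have hproj0 : psdProj (G x) = 0 := by
    refine psdProj_eq Matrix.PosSemidef.zero hnegG (by simp) (by simp)
  have hAval : sdpA G α κ x = α := by
    rw [sdpA, hproj0, zero_pow (two_ne_zero), Matrix.trace_zero,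
      Real.zero_rpow (by linarith : κ ≠ 0), sub_zero]
  have hBval : sdpB h α x = α := by
    rw [sdpB, hhx]; simp
  have hcond : 0 < sdpA G α κ x ∧ 0 < sdpB h α x := by rw [hAval, hBval]; exact ⟨hα, hα⟩
  have htrl2 : 0 ≤ (lam ^ 2).trace := by
    have h2 : (lam ^ 2).trace = (lam * lamᵀ).trace := by rw [pow_two, hlsymm.eq]
    rw [h2]; exact trace_mul_transpose_self_nonneg lam
  set p := sdpP G α κ x lam with hp
  have hppos : 0 < p := by
    rw [hp, sdpP, hAval]
    exact div_pos hα (by linarith)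
  have hproj2 : psdProj (c • G x + p • lam) = p • lam := by
    refine psdProj_eq (posSemidef_smul_real hlpsd hppos.le)
      (posSemidef_smul_real hnegG hc.le) ?_ ?_
    · rw [smul_neg]; abel
    · simp [Matrix.smul_mul, Matrix.mul_smul, Matrix.mul_neg, hlamG]
  have heta : sdpEta f G h x lam mu = 0 := by
    have hz : lam ^ 2 * (G x) ^ 2 = 0 := by
      rw [pow_two, pow_two, Matrix.mul_assoc, ← Matrix.mul_assoc lam (G x) (G x), hlamG,
        Matrix.zero_mul, Matrix.mul_zero]
    rw [sdpEta, hgrad, hz]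
    simp
  rw [sdpAugLagrangian, if_pos hcond, EReal.coe_eq_coe_iff]
  rw [hproj2, heta, hhx, smul_pow, Matrix.trace_smul]
  simp [smul_eq_mul, ← hp]


end
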